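/- Let T : C(S) → C(S) be a bounded positive linear operator on continuous functions on a compact metric space S that is strictly positive (T f(x) > 0 for all x whenever f ≥ 0, f ≢ 0), and suppose the spectral radius of T equals 1 and f is an eigenfunction of T for an eigenvalue λ with |λ| = 1. Then T|f| = |f|; in particular r := |f| is a positive continuous eigenfunction of T for the eigenvalue 1. -/

import Mathlib

open Filter

theorem stmt4 {S : Type*} [MetricSpace S] [CompactSpace S] [Nonempty S]
    (T : C(S, ℝ) →L[ℝ] C(S, ℝ))
    (hpos : ∀ f : C(S, ℝ), 0 ≤ f → 0 ≤ T f)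
    (hstrict : ∀ f : C(S, ℝ), 0 ≤ f → f ≠ 0 → ∀ x, 0 < T f x)
    (hρ : Tendsto (fun n : ℕ => ‖(T ^ n : C(S, ℝ) →L[ℝ] C(S, ℝ))‖ ^ ((1 : ℝ) / n))
      atTop (nhds 1))
    (l : ℝ) (hl : |l| = 1) (f : C(S, ℝ)) (hf : f ≠ 0) (heig : T f = l • f) :
    T |f| = |f| ∧ ∀ x, 0 < |f| x := by
  have hmono : ∀ a b : C(S, ℝ), a ≤ b → T a ≤ T b := by
    intro a b hab
    have h := hpos (b - a) (sub_nonneg.mpr hab)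
    rw [map_sub] at h
    exact sub_nonneg.mp h
  have habsf_nonneg : (0 : C(S, ℝ)) ≤ |f| :=
    ContinuousMap.le_def.mpr fun x => by simp [ContinuousMap.abs_apply, abs_nonneg]
  have habsf_ne : |f| ≠ 0 := by
    intro h
    apply hf
    ext x
    have := ContinuousMap.congr_fun h x
    simp [ContinuousMap.abs_apply] at this
    simpa using this
  -- |f| ≤ T|f|
  have key : |f| ≤ T |f| := by
    have h1 : T f ≤ T |f| :=
      hmono f |f| (ContinuousMap.le_def.mpr fun x => by
        simp [ContinuousMap.abs_apply, le_abs_self])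
    have h2 : -(T f) ≤ T |f| := by
      rw [← map_neg]
      exact hmono (-f) |f| (ContinuousMap.le_def.mpr fun x => by
        simp [ContinuousMap.abs_apply, neg_le_abs])
    refine ContinuousMap.le_def.mpr fun x => ?_
    have hfx : |f| x = |(T f) x| := by
      rw [heig]
      simp [ContinuousMap.abs_apply, abs_mul, hl]
    rw [hfx]
    exact abs_le.mpr ⟨neg_le.mp (by simpa using ContinuousMap.le_def.mp h2 x),
      ContinuousMap.le_def.mp h1 x⟩
  -- main claim
  have hTf : T |f| = |f| := by
    by_contra hne
    set g : C(S, ℝ) := T |f| - |f| with hg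
    have hg0 : (0 : C(S, ℝ)) ≤ g := sub_nonneg.mpr key
    have hgne : g ≠ 0 := sub_ne_zero.mpr hne
    have hTg : ∀ x, 0 < T g x := hstrict g hg0 hgne
    have hTabsf : ∀ x, 0 < T |f| x := hstrict |f| habsf_nonneg habsf_ne
    -- min of T g
    obtain ⟨xg, -, hxg⟩ := isCompact_univ.exists_isMinOn Set.univ_nonempty
      (T g).continuous.continuousOn
    set η : ℝ := T g xg with hη
    have hη0 : 0 < η := hTg xg
    have hηle : ∀ x, η ≤ T g x := fun x => hxg (Set.mem_univ x)
    -- min of T |f|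
    obtain ⟨xe, -, hxe⟩ := isCompact_univ.exists_isMinOn Set.univ_nonempty
      (T |f|).continuous.continuousOn
    set ε : ℝ := T |f| xe with hε
    have hε0 : 0 < ε := hTabsf xe
    have hεle : ∀ x, ε ≤ T |f| x := fun x => hxe (Set.mem_univ x)
    set M : ℝ := ‖T |f|‖ with hM
    have hM0 : 0 < M := lt_of_lt_of_le hε0 ((Real.le_norm_self _).trans
      ((T |f|).norm_coe_le_norm xe))
    have hMle : ∀ x, T |f| x ≤ M := fun x =>
      (Real.le_norm_self _).trans ((T |f|).norm_coe_le_norm x)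
    set δ : ℝ := η / M with hδ
    have hδ0 : 0 < δ := div_pos hη0 hM0
    -- step : (1+δ) • T|f| ≤ T (T |f|)
    have hstep : (1 + δ) • T |f| ≤ T (T |f|) := by
      refine ContinuousMap.le_def.mpr fun x => ?_
      have h1 : T (T |f|) x = T |f| x + T g x := by
        have : T g = T (T |f|) - T |f| := by rw [hg, map_sub]
        have := ContinuousMap.congr_fun this x
        simp only [ContinuousMap.sub_apply] at this
        linarith
      have h2 : δ * T |f| x ≤ η := by
        rw [hδ, div_mul_eq_mul_div, div_le_iff₀ hM0]
        have := hMle x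
        nlinarith [hTabsf x]
      have h3 : η ≤ T g x := hηle x
      simp only [ContinuousMap.smul_apply, smul_eq_mul]
      nlinarith
    -- induction
    have hiter : ∀ n : ℕ, ((1 + δ) ^ n) • T |f| ≤ (T ^ (n + 1)) |f| := by
      intro n
      induction n with
      | zero => simp
      | succ n ih =>
        have h1 : T (((1 + δ) ^ n) • T |f|) ≤ T ((T ^ (n + 1)) |f|) := hmono _ _ ih
        rw [map_smul] at h1
        have h2 : ((1 + δ) ^ n) • ((1 + δ) • T |f|) ≤ ((1 + δ) ^ n) • T (T |f|) := by
          refine ContinuousMap.le_def.mpr fun x => ?_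
          simp only [ContinuousMap.smul_apply, smul_eq_mul]
          exact mul_le_mul_of_nonneg_left
            (by simpa using ContinuousMap.le_def.mp hstep x)
            (pow_nonneg (by linarith) n)
        have h3 : (T ^ (n + 2)) |f| = T ((T ^ (n + 1)) |f|) := by
          rw [pow_succ']; rfl
        calc ((1 + δ) ^ (n + 1)) • T |f|
            = ((1 + δ) ^ n) • ((1 + δ) • T |f|) := by
              rw [smul_smul, ← pow_succ]
          _ ≤ ((1 + δ) ^ n) • T (T |f|) := h2
          _ ≤ (T ^ (n + 2)) |f| := by rw [h3]; exact h1
    -- norm bound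
    have hnf0 : 0 < ‖(|f| : C(S, ℝ))‖ := norm_pos_iff.mpr habsf_ne
    set C : ℝ := ε / ((1 + δ) * ‖(|f| : C(S, ℝ))‖) with hC
    have hC0 : 0 < C := div_pos hε0 (mul_pos (by linarith) hnf0)
    have hbound : ∀ n : ℕ, 1 ≤ n → C * (1 + δ) ^ n ≤ ‖(T ^ n : C(S, ℝ) →L[ℝ] C(S, ℝ))‖ := by
      intro n hn
      obtain ⟨m, rfl⟩ := Nat.exists_eq_add_of_le hn
      have h1 : (1 + δ) ^ m * ε ≤ ((T ^ (m + 1)) |f|) xe := by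
        have := ContinuousMap.le_def.mp (hiter m) xe
        simp only [ContinuousMap.smul_apply, smul_eq_mul] at this
        calc (1 + δ) ^ m * ε = (1 + δ) ^ m * T |f| xe := by rw [hε]
          _ ≤ ((T ^ (m + 1)) |f|) xe := this
      have h2 : ((T ^ (m + 1)) |f|) xe ≤ ‖(T ^ (m + 1) : C(S, ℝ) →L[ℝ] C(S, ℝ))‖ *
          ‖(|f| : C(S, ℝ))‖ :=
        (Real.le_norm_self _).trans (((T ^ (m + 1)) |f|).norm_coe_le_norm xe |>.trans
          ((T ^ (m + 1)).le_opNorm |f|))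
      have hδ1 : (0:ℝ) < 1 + δ := by linarith
      rw [show 1 + m = m + 1 by ring]
      rw [hC, div_mul_eq_mul_div, div_le_iff₀ (mul_pos hδ1 hnf0)]
      calc ε * (1 + δ) ^ (m + 1)
          = ((1 + δ) ^ m * ε) * (1 + δ) := by ring
        _ ≤ (‖(T ^ (m + 1) : C(S, ℝ) →L[ℝ] C(S, ℝ))‖ * ‖(|f| : C(S, ℝ))‖) * (1 + δ) := by
            nlinarith [h1.trans h2]
        _ = ‖(T ^ (m + 1) : C(S, ℝ) →L[ℝ] C(S, ℝ))‖ * ((1 + δ) * ‖(|f| : C(S, ℝ))‖) := by ring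
    -- limit comparison
    have hF : Tendsto (fun n : ℕ => (C * (1 + δ) ^ n) ^ ((1 : ℝ) / n)) atTop (nhds (1 + δ)) := by
      have h0 : Tendsto (fun n : ℕ => (1:ℝ)/n) atTop (nhds 0) := tendsto_one_div_atTop_nhds_zero_nat
      have hc : ContinuousAt (fun x : ℝ => C ^ x) 0 := Real.continuousAt_const_rpow hC0.ne'
      have h1 : Tendsto (fun n : ℕ => C ^ ((1:ℝ)/n)) atTop (nhds 1) := by
        simpa [Real.rpow_zero, Function.comp_def] using hc.tendsto.comp h0
      have h2 : Tendsto (fun n : ℕ => C ^ ((1:ℝ)/n) * (1 + δ)) atTop (nhds (1 * (1 + δ))) :=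
        h1.mul_const _
      rw [one_mul] at h2
      refine h2.congr' ?_
      filter_upwards [eventually_ge_atTop 1] with n hn
      have hn0 : (n : ℝ) ≠ 0 := Nat.cast_ne_zero.mpr (by omega)
      have hδ1 : (0:ℝ) ≤ 1 + δ := by linarith
      rw [Real.mul_rpow hC0.le (pow_nonneg hδ1 n), ← Real.rpow_natCast (1 + δ) n,
        ← Real.rpow_mul hδ1]
      rw [mul_one_div, div_self hn0, Real.rpow_one]
    have hev : (fun n : ℕ => (C * (1 + δ) ^ n) ^ ((1 : ℝ) / n)) ≤ᶠ[atTop]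
        (fun n : ℕ => ‖(T ^ n : C(S, ℝ) →L[ℝ] C(S, ℝ))‖ ^ ((1 : ℝ) / n)) := by
      filter_upwards [eventually_ge_atTop 1] with n hn
      exact Real.rpow_le_rpow (by positivity) (hbound n hn)
        (by positivity)
    have := le_of_tendsto_of_tendsto hF hρ hev
    linarith
  refine ⟨hTf, fun x => ?_⟩
  have := hstrict |f| habsf_nonneg habsf_ne x
  rwa [ContinuousMap.ext_iff.mp hTf x] at this
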